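/- arXiv:1005.2946 — 4 statements merged into one kernel-verified Lean document; each statement's English description precedes it below -/
import Mathlib

section
/- Let n ≥ 2 and suppose f(x) = x^j ∑_{k≥0} a_k x^k with a_0 ≠ 0 is a formal power series satisfying U_n f = λ f for some λ ∈ ℂ. If n divides j, then j = 0 and λ = 1. -/
/-- The Hecke operator `U n` on formal power series. -/
noncomputable def heckeU (n : ℕ) (f : PowerSeries ℂ) : PowerSeries ℂ :=
  PowerSeries.mk fun k => PowerSeries.coeff (n * k) f

theorem stmt_8 (n : ℕ) (hn : 2 ≤ n) (j : ℕ) (a : ℕ → ℂ) (ha : a 0 ≠ 0) (lam : ℂ)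
    (f : PowerSeries ℂ)
    (hf : f = (PowerSeries.X : PowerSeries ℂ) ^ j * PowerSeries.mk a)
    (heig : heckeU n f = lam • f) (hdvd : n ∣ j) :
    j = 0 ∧ lam = 1 := by
  have hcoeff : ∀ m, PowerSeries.coeff m f = if j ≤ m then a (m - j) else 0 := by
    intro m
    rw [hf, PowerSeries.coeff_X_pow_mul']
    simp
  obtain ⟨q, hq⟩ := hdvd
  have key : ∀ k, PowerSeries.coeff (n * k) f = lam * PowerSeries.coeff k f := by
    intro k
    have := congrArg (PowerSeries.coeff k) heig
    simpa [heckeU] using this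
  have hj : j = 0 := by
    by_contra hj0
    have hqj : q < j := by
      rcases Nat.eq_zero_or_pos q with h | h
      · omega
      · calc q < n * q := by nlinarith
          _ = j := hq.symm
    have h1 := key q
    rw [← hq] at h1
    rw [hcoeff j, hcoeff q, if_pos le_rfl, if_neg (by omega)] at h1
    simp at h1
    exact ha h1
  refine ⟨hj, ?_⟩
  have h1 := key 0
  rw [Nat.mul_zero, hcoeff 0, if_pos (by omega)] at h1
  subst hj
  simp at h1
  field_simp at h1
  
  exact h1.symm
end

section
/- Let a ∈ ℂ, and let j, n be positive integers with n not dividing j. Set r := n(1 - {j/n}) - 1 where {j/n} denotes the fractional part of j/n, and N := n(k+1-{j/n}) for a natural number k. Then (a)_N = n^{nk} (a)_{r+1} ∏_{i=r+1}^{r+n} ((a+i)/n)_k. -/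
open Finset Polynomial

lemma ascPochhammer_eval_add_complex (p q : ℕ) (x : ℂ) :
    (ascPochhammer ℂ (p + q)).eval x =
      (ascPochhammer ℂ p).eval x * (ascPochhammer ℂ q).eval (x + p) := by
  rw [← ascPochhammer_mul, eval_mul, eval_comp, eval_add, eval_X, eval_natCast]

lemma ascPochhammer_eval_prod (m : ℕ) (y : ℂ) :
    (ascPochhammer ℂ m).eval y = ∏ i ∈ Finset.range m, (y + i) := by
  induction m with
  | zero => simp
  | succ m ih => rw [ascPochhammer_succ_eval, ih, Finset.prod_range_succ]

lemma gauss_mult (n k : ℕ) (hn : 0 < n) (x : ℂ) :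
    (ascPochhammer ℂ (n * k)).eval x =
      (n : ℂ) ^ (n * k) * ∏ i ∈ Finset.range n,
        (ascPochhammer ℂ k).eval ((x + i) / n) := by
  have hn0 : (n : ℂ) ≠ 0 := Nat.cast_ne_zero.mpr hn.ne'
  induction k with
  | zero => simp
  | succ k ih =>
    have hmul : n * (k + 1) = n * k + n := by ring
    rw [hmul, ascPochhammer_eval_add_complex, ih]
    have heach : ∀ i ∈ Finset.range n,
        (ascPochhammer ℂ (k + 1)).eval ((x + i) / n) =
          (ascPochhammer ℂ k).eval ((x + i) / n) * ((x + i) / n + k) := by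
      intro i _
      rw [ascPochhammer_succ_eval]
    rw [Finset.prod_congr rfl heach, Finset.prod_mul_distrib]
    have hlast : (ascPochhammer ℂ n).eval (x + ↑(n * k)) =
        (n : ℂ) ^ n * ∏ i ∈ Finset.range n, ((x + i) / n + k) := by
      rw [ascPochhammer_eval_prod,
        show ((n:ℂ))^n = ∏ _i ∈ Finset.range n, (n:ℂ) by simp, ← Finset.prod_mul_distrib]
      refine Finset.prod_congr rfl fun i _ => ?_
      field_simp
      push_cast
      ring
    rw [hlast, pow_add]
    ring

theorem stmt_13 (a : ℂ) (j n : ℕ) (hj : 0 < j) (hn : 0 < n) (hdvd : ¬ n ∣ j)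
    (k : ℕ) (r N : ℕ)
    (hr : r = n - j % n - 1)        -- r = n(1 - {j/n}) - 1
    (hN : N = n * (k + 1) - j % n)  -- N = n(k + 1 - {j/n})
    :
    (ascPochhammer ℂ N).eval a =
      (n : ℂ) ^ (n * k) * (ascPochhammer ℂ (r + 1)).eval a *
        ∏ i ∈ Finset.Icc (r + 1) (r + n),
          (ascPochhammer ℂ k).eval ((a + i) / n) := by
  have hm1 : 0 < j % n := Nat.pos_of_ne_zero (fun h => hdvd (Nat.dvd_of_mod_eq_zero h))
  have hm2 : j % n < n := Nat.mod_lt j hn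
  have hr1 : r + 1 = n - j % n := by omega
  have hexp : n * (k + 1) = n * k + n := by ring
  have hNeq : N = (r + 1) + n * k := by omega
  rw [hNeq, ascPochhammer_eval_add_complex, gauss_mult n k hn]
  have : ∏ i ∈ Finset.Icc (r + 1) (r + n), (ascPochhammer ℂ k).eval ((a + i) / n)
      = ∏ i ∈ Finset.range n, (ascPochhammer ℂ k).eval ((a + ↑(r + 1) + i) / n) := by
    rw [← Finset.Ico_add_one_right_eq_Icc, Finset.prod_Ico_eq_prod_range]
    have hcard : r + n + 1 - (r + 1) = n := by omega
    rw [hcard]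
    refine Finset.prod_congr rfl fun i _ => ?_
    push_cast
    ring_nf
  rw [this]
  ring
end

section
/- Let a = (a_1,...,a_p) and b = (b_1,...,b_p) be tuples of real numbers such that e^{a_1 t} + ··· + e^{a_p t} = e^{b_1 t} + ··· + e^{b_p t} for all real t. Then the multisets {a_1,...,a_p} and {b_1,...,b_p} are equal. -/
open Finset

theorem stmt_16 (p : ℕ) (a b : Fin p → ℝ)
    (h : ∀ t : ℝ, ∑ i, Real.exp (a i * t) = ∑ i, Real.exp (b i * t)) :
    ∃ σ : Equiv.Perm (Fin p), ∀ i, a i = b (σ i) := by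
  classical
  -- Linear independence of the characters t ↦ exp (x t)
  have hchar : LinearIndependent ℝ (fun x : ℝ => fun t : ℝ => Real.exp (x * t)) := by
    let φ : ℝ → (Multiplicative ℝ →* ℝ) := fun x =>
      { toFun := fun t => Real.exp (x * Multiplicative.toAdd t)
        map_one' := by simp
        map_mul' := fun s t => by
          simp [mul_add, Real.exp_add] }
    have hinj : Function.Injective φ := by
      intro x y hxy
      have h1 := DFunLike.congr_fun hxy (Multiplicative.ofAdd 1)
      simp only [φ, MonoidHom.coe_mk, OneHom.coe_mk, toAdd_ofAdd, mul_one] at h1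
      exact Real.exp_injective h1
    exact (linearIndependent_monoidHom (Multiplicative ℝ) ℝ).comp φ hinj
  -- fiber counts agree
  have hcount : ∀ x : ℝ,
      (univ.filter fun i => a i = x).card = (univ.filter fun i => b i = x).card := by
    set S : Finset ℝ := (univ.image a) ∪ (univ.image b) with hS
    set c : ℝ → ℝ := fun x =>
      ((univ.filter fun i => a i = x).card : ℝ) - (univ.filter fun i => b i = x).card with hc
    have key : ∀ (f : Fin p → ℝ) (t : ℝ), (∀ i, f i ∈ S) →
        ∑ x ∈ S, ((univ.filter fun i => f i = x).card : ℝ) * Real.exp (x * t)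
          = ∑ i, Real.exp (f i * t) := by
      intro f t hf
      rw [← Finset.sum_fiberwise_of_maps_to (fun i _ => hf i)
        (fun i => Real.exp (f i * t))]
      refine Finset.sum_congr rfl fun x _ => ?_
      rw [Finset.sum_congr rfl (fun i hi => by
        rw [(Finset.mem_filter.1 hi).2]), Finset.sum_const, nsmul_eq_mul]
    have hzero : ∀ x ∈ S, c x = 0 := by
      have := linearIndependent_iff'.1 hchar S c ?_
      · exact this
      · funext t
        simp only [Finset.sum_apply, Pi.smul_apply, smul_eq_mul, Pi.zero_apply, hc]
        have ha : ∀ i, a i ∈ S := fun i => Finset.mem_union_left _ (mem_image_of_mem a (mem_univ i))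
        have hb : ∀ i, b i ∈ S := fun i => Finset.mem_union_right _ (mem_image_of_mem b (mem_univ i))
        simp only [sub_mul]
        rw [Finset.sum_sub_distrib, key a t ha, key b t hb, h t, sub_self]
    intro x
    by_cases hx : x ∈ S
    · have := hzero x hx
      rw [hc, sub_eq_zero] at this
      exact_mod_cast this
    · have h1 : (univ.filter fun i => a i = x) = ∅ := by
        rw [Finset.filter_eq_empty_iff]
        intro i _ hix
        exact hx (Finset.mem_union_left _ (hix ▸ mem_image_of_mem a (mem_univ i)))
      have h2 : (univ.filter fun i => b i = x) = ∅ := by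
        rw [Finset.filter_eq_empty_iff]
        intro i _ hix
        exact hx (Finset.mem_union_right _ (hix ▸ mem_image_of_mem b (mem_univ i)))
      rw [h1, h2]
  -- multiset equality
  have hms : (Finset.univ.val.map a) = (Finset.univ.val.map b) := by
    ext x
    rw [Multiset.count_map, Multiset.count_map]
    have : ∀ f : Fin p → ℝ,
        Multiset.card (Finset.univ.val.filter fun i => x = f i)
          = (univ.filter fun i => f i = x).card := by
      intro f
      rw [show (univ.filter fun i => f i = x) = univ.filter (fun i => x = f i) from
        Finset.filter_congr (fun i _ => ⟨Eq.symm, Eq.symm⟩)]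
      rfl
    rw [this a, this b, hcount x]
  -- turn multiset equality into a permutation via sorting
  have hperm : (List.ofFn a).Perm (List.ofFn b) := by
    rw [← Multiset.coe_eq_coe, ← Fin.univ_val_map, ← Fin.univ_val_map]
    exact hms
  set σa := Tuple.sort a
  set σb := Tuple.sort b
  have hsa : List.Pairwise (· ≤ ·) (List.ofFn (a ∘ σa)) := (Tuple.monotone_sort a).sortedLE_ofFn.pairwise
  have hsb : List.Pairwise (· ≤ ·) (List.ofFn (b ∘ σb)) := (Tuple.monotone_sort b).sortedLE_ofFn.pairwise
  have hperm' : (List.ofFn (a ∘ σa)).Perm (List.ofFn (b ∘ σb)) :=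
    ((σa.ofFn_comp_perm a).trans hperm).trans (σb.ofFn_comp_perm b).symm
  have heq : a ∘ σa = b ∘ σb :=
    List.ofFn_injective (List.Perm.eq_of_pairwise' hsa hsb hperm')
  refine ⟨σa.symm.trans σb, fun i => ?_⟩
  have := congrFun heq (σa.symm i)
  simpa using this
end

section
/- Let f(x) = ∑_{k≥1} c_k x^k be a formal power series with no constant term such that for every positive integer n there exists λ_n ∈ ℂ with U_n f = λ_n f. Then c_k = λ_k c_1 for every k ≥ 1, i.e., f(x) = c_1 ∑_{k≥1} λ_k x^k, and the function k ↦ λ_k is completely multiplicative (λ_{nk} = λ_n λ_k for all n, k ≥ 1) provided c_1 ≠ 0. -/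
theorem stmt_19 (c : ℕ → ℂ) (hc0 : c 0 = 0) (lam : ℕ → ℂ)
    (h : ∀ n : ℕ, 0 < n →
      heckeU n (PowerSeries.mk c) = lam n • PowerSeries.mk c) :
    (∀ k : ℕ, 1 ≤ k → c k = lam k * c 1) ∧
    (c 1 ≠ 0 → ∀ n k : ℕ, 0 < n → 0 < k → lam (n * k) = lam n * lam k) := by
  have key : ∀ n k : ℕ, 0 < n → c (n * k) = lam n * c k := by
    intro n k hn
    have := congrArg (PowerSeries.coeff k) (h n hn)
    simpa [heckeU, PowerSeries.coeff_mk] using this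
  have h1 : ∀ k : ℕ, 1 ≤ k → c k = lam k * c 1 := fun k hk => by
    simpa using key k 1 hk
  refine ⟨h1, fun hc1 n k hn hk => ?_⟩
  have e1 : c (n * k) = lam (n * k) * c 1 :=
    h1 _ (Nat.one_le_iff_ne_zero.mpr (Nat.mul_ne_zero hn.ne' hk.ne'))
  have e2 : c (n * k) = lam n * (lam k * c 1) := by
    rw [key n k hn, h1 k hk]
  field_simp at e1 e2 ⊢
  have := e1.symm.trans e2
  exact mul_right_cancel₀ hc1 (by linear_combination this)
end
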